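/- arXiv:1102.5183 — 3 statements merged into one kernel-verified Lean document; each statement's English description precedes it below -/
import Mathlib

section
/- The bilinear form φ on B(q) determined on basis elements by φ(L_{α,i}, L_{β,j}) = δ_{α+β,0} δ_{i,0} δ_{j,0} (α³ − α)/12 is a 2-cocycle on B(q) that is not a 2-coboundary, and every 2-cocycle on B(q) is the sum of a complex scalar multiple of φ and a 2-coboundary. In particular the second cohomology group H²(B(q), ℂ) is one-dimensional, spanned by the class of φ. -/
variable {B : Type} [LieRing B] [LieAlgebra ℂ B]

/-- A 2-cocycle on a complex Lie algebra `B`: a bilinear form `ψ : B × B → ℂ` which is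
skew-symmetric and satisfies the cocycle identity
`ψ([x,y],z) + ψ([y,z],x) + ψ([z,x],y) = 0`. -/
def IsTwoCocycle (ψ : B →ₗ[ℂ] B →ₗ[ℂ] ℂ) : Prop :=
  (∀ x y : B, ψ x y = - ψ y x) ∧
  (∀ x y z : B, ψ ⁅x, y⁆ z + ψ ⁅y, z⁆ x + ψ ⁅z, x⁆ y = 0)

/-- A 2-coboundary (trivial 2-cocycle): `ψ(x,y) = f([x,y])` for some linear
`f : B → ℂ`. -/
def IsTwoCoboundary (ψ : B →ₗ[ℂ] B →ₗ[ℂ] ℂ) : Prop :=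
  ∃ f : B →ₗ[ℂ] ℂ, ∀ x y : B, ψ x y = f ⁅x, y⁆

noncomputable section

def Acoef (q : ℕ) (α β : ℤ) (i j : ℕ) : ℂ := ((β * (i + q) - α * (j + q) : ℤ) : ℂ)

lemma key (q : ℕ) (hq : 0 < q) (Ψ : ℤ × ℕ → ℤ × ℕ → ℂ)
    (skew : ∀ p p', Ψ p p' = - Ψ p' p)
    (coc : ∀ (α β γ : ℤ) (i j k : ℕ),
      Acoef q α β i j * Ψ (α+β, i+j) (γ,k)
      + Acoef q β γ j k * Ψ (β+γ, j+k) (α,i)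
      + Acoef q γ α k i * Ψ (γ+α, k+i) (β,j) = 0) :
    ∃ (c : ℂ) (F : ℤ × ℕ → ℂ), ∀ (α β : ℤ) (i j : ℕ),
      Ψ (α,i) (β,j) - c * (if α + β = 0 ∧ i = 0 ∧ j = 0 then ((α:ℂ)^3 - α)/12 else 0)
        = Acoef q α β i j * F (α+β, i+j) := by
  have hq' : (q : ℂ) ≠ 0 := Nat.cast_ne_zero.2 hq.ne'
  set f₁ : ℤ × ℕ → ℂ := fun p => if p.1 = 0 then 0 else - Ψ p (0,0) / (p.1 * q) with hf₁
  have R1 : ∀ (α β : ℤ) (i j : ℕ),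
      Acoef q α β i j * Ψ (α+β, i+j) (0,0) + ((α+β : ℤ) : ℂ) * q * Ψ (α,i) (β,j) = 0 := by
    intro α β i j
    have h := coc α β 0 i j 0
    simp only [add_zero, zero_add] at h
    rw [skew (β, j) (α, i)] at h
    simp only [Acoef] at h ⊢
    push_cast at h ⊢
    linear_combination h
  -- off-diagonal description
  have offdiag : ∀ (α β : ℤ) (i j : ℕ), α + β ≠ 0 →
      Ψ (α,i) (β,j) = Acoef q α β i j * f₁ (α+β, i+j) := by
    intro α β i j hαβ
    have hs : ((α + β : ℤ) : ℂ) ≠ 0 := Int.cast_ne_zero.2 hαβ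
    have hs' : (α : ℂ) + β ≠ 0 := by push_cast at hs; exact hs
    have h := R1 α β i j
    rw [hf₁]
    simp only [hαβ, if_neg, ite_false]
    have hD : ((α + β : ℤ) : ℂ) * q ≠ 0 := mul_ne_zero hs hq'
    rw [← mul_div_assoc, eq_div_iff hD]
    linear_combination h
  -- the normalized cocycle
  set ψb : ℤ → ℤ → ℕ → ℕ → ℂ :=
    fun α β i j => Ψ (α,i) (β,j) - Acoef q α β i j * f₁ (α+β, i+j) with hψbdef
  have hψb0 : ∀ (α β : ℤ) (i j : ℕ), α + β ≠ 0 → ψb α β i j = 0 := by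
    intro α β i j h
    rw [hψbdef]
    simp only [offdiag α β i j h, sub_self]
  have skewb : ∀ (α β : ℤ) (i j : ℕ), ψb α β i j = - ψb β α j i := by
    intro α β i j
    rw [hψbdef]
    simp only
    rw [skew (α,i) (β,j), add_comm β α, add_comm j i]
    have : Acoef q β α j i = - Acoef q α β i j := by
      simp only [Acoef]; push_cast; ring
    rw [this]; ring
  have cocb : ∀ (α β γ : ℤ) (i j k : ℕ),
      Acoef q α β i j * ψb (α+β) γ (i+j) k
      + Acoef q β γ j k * ψb (β+γ) α (j+k) i
      + Acoef q γ α k i * ψb (γ+α) β (k+i) j = 0 := by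
    intro α β γ i j k
    have h := coc α β γ i j k
    have hcoef : Acoef q α β i j * Acoef q (α+β) γ (i+j) k
        + Acoef q β γ j k * Acoef q (β+γ) α (j+k) i
        + Acoef q γ α k i * Acoef q (γ+α) β (k+i) j = 0 := by
      simp only [Acoef]; push_cast; ring
    rw [hψbdef]
    simp only
    have e1 : (β+γ)+α = (α+β)+γ := by ring
    have e2 : (j+k)+i = (i+j)+k := by omega
    have e3 : (γ+α)+β = (α+β)+γ := by ring
    have e4 : (k+i)+j = (i+j)+k := by omega
    rw [e1, e2, e3, e4]
    linear_combination h - f₁ ((α+β)+γ, (i+j)+k) * hcoef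
  -- the diagonal function
  set g : ℤ → ℕ → ℕ → ℂ := fun α i j => ψb α (-α) i j with hgdef
  have hg0 : ∀ i j, g 0 i j = ψb 0 0 i j := by intro i j; rw [hgdef]; norm_num
  -- relation (A)
  have relA : ∀ (α : ℤ), α ≠ 0 → ∀ (i j k : ℕ),
      ((k:ℂ)+q) * (g α (k+i) j - g α i (j+k)) = ((i:ℂ)+j+2*q) * g 0 (i+j) k := by
    intro α hα i j k
    have hα' : (α : ℂ) ≠ 0 := Int.cast_ne_zero.2 hα
    have h := cocb α (-α) 0 i j k
    have e1 : α + -α = (0:ℤ) := by ring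
    have e2 : -α + 0 = -α := by ring
    have e3 : (0:ℤ) + α = α := by ring
    rw [e1, e2, e3] at h
    rw [skewb (-α) α (j+k) i] at h
    have hgg : ∀ i j : ℕ, ψb α (-α) i j = g α i j := fun _ _ => rfl
    have hgg0 : ∀ i j : ℕ, ψb 0 0 i j = g 0 i j := fun i j => (hg0 i j).symm
    rw [hgg, hgg, hgg0] at h
    apply mul_left_cancel₀ hα'
    simp only [Acoef] at h
    push_cast at h ⊢
    linear_combination h
  -- g 0 s 0 = 0 and g 0 0 s = 0
  have hG0a : ∀ s, g 0 s 0 = 0 := by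
    intro s
    have h := relA 1 one_ne_zero s 0 0
    simp only [add_zero, zero_add, Nat.cast_zero] at h
    have hne : (s:ℂ) + 2*q ≠ 0 := by
      have : ((s + 2*q : ℕ) : ℂ) ≠ 0 := Nat.cast_ne_zero.2 (by omega)
      push_cast at this; exact this
    have := h.symm
    rw [sub_self, mul_zero] at this
    exact (mul_eq_zero.1 this).resolve_left hne
  have hG0b : ∀ s, g 0 0 s = 0 := by
    intro s
    rw [hg0, skewb 0 0 0 s, ← hg0, hG0a s, neg_zero]
  have hgg : ∀ (a : ℤ) (i j : ℕ), ψb a (-a) i j = g a i j := fun _ _ _ => rfl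
  -- sub0' : reduction to second index
  have sub0' : ∀ (α : ℤ), α ≠ 0 → ∀ (j k : ℕ),
      ((j:ℂ)+q) * g α j k = ((j:ℂ)+q) * g α 0 (j+k) + ((k:ℂ)+2*q) * g 0 k j := by
    intro α hα j k
    have h := relA α hα 0 k j
    rw [Nat.add_comm k j] at h
    simp only [Nat.add_zero, Nat.zero_add, Nat.cast_zero] at h
    linear_combination h
  have hcastq : ∀ n : ℕ, (n:ℂ) + q ≠ 0 := by
    intro n
    have : ((n + q : ℕ) : ℂ) ≠ 0 := Nat.cast_ne_zero.2 (by omega)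
    push_cast at this; exact this
  have hcast2q : ∀ n : ℕ, (n:ℂ) + 2*q ≠ 0 := by
    intro n
    have : ((n + 2*q : ℕ) : ℂ) ≠ 0 := Nat.cast_ne_zero.2 (by omega)
    push_cast at this; exact this
  -- swap lemma
  have hswap : ∀ (γ : ℤ), γ ≠ 0 → ∀ s : ℕ, g γ s 0 = g γ 0 s := by
    intro γ hγ s
    have h := sub0' γ hγ s 0
    rw [hG0b] at h
    simp only [Nat.add_zero, Nat.cast_zero, mul_zero, add_zero] at h
    exact mul_left_cancel₀ (hcastq s) h
  -- the main reduced cocycle relation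
  have C0 : ∀ (α β : ℤ) (j k : ℕ),
      Acoef q α β 0 j * g (α+β) j k - Acoef q β (-(α+β)) j k * g α 0 (j+k)
        - Acoef q (-(α+β)) α k 0 * g β j k = 0 := by
    intro α β j k
    have h := cocb α β (-(α+β)) 0 j k
    have e1 : β + -(α+β) = -α := by ring
    have e2 : -(α+β) + α = -β := by ring
    rw [e1, e2] at h
    simp only [Nat.zero_add, Nat.add_zero] at h
    rw [skewb (-α) α (j+k) 0, skewb (-β) β (k) j] at h
    rw [hgg, hgg, hgg] at h
    linear_combination h
  -- additivity for positive level
  have Add : ∀ (s : ℕ), 0 < s → ∀ (α β : ℤ), α ≠ 0 → β ≠ 0 → α + β ≠ 0 →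
      g (α+β) 0 s = g α 0 s + g β 0 s := by
    intro s hs α β hα hβ hαβ
    have hα' : (α:ℂ) ≠ 0 := Int.cast_ne_zero.2 hα
    have hs' : (s:ℂ) ≠ 0 := Nat.cast_ne_zero.2 hs.ne'
    have h1 := C0 α β 0 s
    have h2 := C0 α β s 0
    simp only [Nat.zero_add, Nat.add_zero] at h1 h2
    rw [hswap (α+β) hαβ s, hswap β hβ s] at h2
    apply mul_left_cancel₀ (mul_ne_zero hα' hs')
    simp only [Acoef] at h1 h2
    push_cast at h1 h2 ⊢
    linear_combination h1 - h2
  -- vanishing of g 0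
  have hGzero : ∀ a b : ℕ, g 0 a b = 0 := by
    intro a b
    rcases Nat.eq_zero_or_pos a with ha | ha
    · rw [ha]; exact hG0b b
    · have h1 := C0 1 1 b a
      have hs2 := sub0' (1+1 : ℤ) (by norm_num) b a
      have hs1 := sub0' 1 one_ne_zero b a
      have hadd := Add (b+a) (by omega) 1 1 one_ne_zero one_ne_zero (by norm_num)
      have hT : ((a:ℂ)+2*q) * ((b:ℂ)+(a:ℂ)+3*q) * g 0 a b = 0 := by
        simp only [Acoef] at h1
        push_cast at h1 hs2 hs1 hadd ⊢
        linear_combination (-((b:ℂ)+q))*h1 - (b:ℂ)*hs2 - ((a:ℂ)+3*q)*hs1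
          - (b:ℂ)*((b:ℂ)+q)*hadd
      have := (mul_eq_zero.1 hT).resolve_left (by
        apply mul_ne_zero (hcast2q a)
        have : ((b + a + 3*q : ℕ) : ℂ) ≠ 0 := Nat.cast_ne_zero.2 (by omega)
        push_cast at this; intro hcon; apply this; linear_combination hcon)
      exact this
  -- g depends only on the sum of indices
  have hsum : ∀ (α : ℤ), α ≠ 0 → ∀ i j : ℕ, g α i j = g α 0 (i+j) := by
    intro α hα i j
    have h := sub0' α hα i j
    rw [hGzero j i] at h
    simp only [mul_zero, add_zero] at h
    exact mul_left_cancel₀ (hcastq i) h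
  -- linearity at positive level
  have hodd : ∀ (α : ℤ) (s : ℕ), g (-α) 0 s = - g α 0 s := by
    intro α s
    rcases eq_or_ne α 0 with h0 | h0
    · rw [h0]; rw [neg_zero, hG0b, neg_zero]
    · rw [← hgg, skewb, neg_neg, hgg, hswap α h0]
  have hlin : ∀ (s : ℕ), 0 < s → ∀ (α : ℤ), α ≠ 0 → g α 0 s = (α:ℂ) * g 1 0 s := by
    intro s hs
    have hpos : ∀ n : ℤ, 1 ≤ n → g n 0 s = (n:ℂ) * g 1 0 s :=
      Int.le_induction (by rw [Int.cast_one, one_mul])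
        (fun n hn ih => by
          have h := Add s hs n 1 (by omega) one_ne_zero (by omega)
          rw [ih] at h
          rw [h]; push_cast; ring)
    intro α hα
    rcases lt_or_gt_of_ne hα with h | h
    · have h1 : 1 ≤ -α := by omega
      have := hpos (-α) h1
      rw [hodd α s] at this
      push_cast at this
      linear_combination -this
    · exact hpos α (by omega)
  -- Virasoro relation at level 0
  have hrelu : ∀ (α β : ℤ),
      ((β:ℂ)-α) * g (α+β) 0 0 + ((α:ℂ)+2*β) * g α 0 0 - (2*(α:ℂ)+β) * g β 0 0 = 0 := by
    intro α β
    have h := C0 α β 0 0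
    apply mul_left_cancel₀ hq'
    simp only [Acoef] at h
    push_cast at h ⊢
    linear_combination h
  set aa : ℂ := (g 2 0 0 - 2 * g 1 0 0)/6 with haa
  set bb : ℂ := g 1 0 0 - aa with hbb
  set w : ℤ → ℂ := fun α => g α 0 0 - aa * (α:ℂ)^3 - bb * α with hw
  have hw1 : w 1 = 0 := by rw [hw]; simp only [Int.cast_one]; rw [hbb]; ring
  have hw2 : w 2 = 0 := by
    rw [hw]; simp only [Int.cast_two]; rw [hbb, haa]; ring
  have hwrel : ∀ (α β : ℤ),
      ((β:ℂ)-α) * w (α+β) + ((α:ℂ)+2*β) * w α - (2*(α:ℂ)+β) * w β = 0 := by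
    intro α β
    rw [hw]
    simp only
    push_cast
    linear_combination hrelu α β
  have hwpos : ∀ n : ℤ, 2 ≤ n → w n = 0 :=
    Int.le_induction hw2 (fun n hn ih => by
      have h := hwrel n 1
      rw [ih, hw1] at h
      simp only [mul_zero, add_zero, sub_zero] at h
      push_cast at h
      have hne : (1:ℂ) - (n:ℂ) ≠ 0 := by
        intro hcon
        have h5 : ((n:ℂ)) = ((1:ℤ):ℂ) := by push_cast; linear_combination -hcon
        exact absurd (Int.cast_injective h5) (by omega)
      exact (mul_eq_zero.1 h).resolve_left hne)
  have hwodd : ∀ α : ℤ, w (-α) = - w α := by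
    intro α
    rw [hw]
    simp only
    push_cast
    linear_combination hodd α 0
  have hwall : ∀ α : ℤ, α ≠ 0 → w α = 0 := by
    intro α hα
    rcases lt_or_gt_of_ne hα with h | h
    · have h2 : w (-α) = 0 := by
        rcases eq_or_lt_of_le (show 1 ≤ -α by omega) with h1 | h1
        · rw [← h1]; exact hw1
        · exact hwpos _ (by omega)
      rw [← neg_neg α, hwodd, h2, neg_zero]
    · rcases eq_or_lt_of_le (show 1 ≤ α by omega) with h1 | h1
      · rw [← h1]; exact hw1
      · exact hwpos _ (by omega)
  have hu : ∀ α : ℤ, α ≠ 0 → g α 0 0 = aa * (α:ℂ)^3 + bb * α := by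
    intro α hα
    have := hwall α hα
    rw [hw] at this
    simp only at this
    linear_combination this
  -- assemble
  set F : ℤ × ℕ → ℂ := fun p => if p.1 = 0 then
      (if p.2 = 0 then -(aa+bb)/(2*q) else -(g 1 0 p.2)/((p.2:ℂ)+2*q))
      else - Ψ p (0,0) / ((p.1:ℂ) * q) with hFdef
  have hFval : ∀ (z : ℤ) (m : ℕ), F (z,m) = if z = 0 then
      (if m = 0 then -(aa+bb)/(2*q) else -(g 1 0 m)/((m:ℂ)+2*q))
      else - Ψ (z,m) (0,0) / ((z:ℂ) * q) := fun _ _ => rfl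
  refine ⟨12 * aa, F, ?_⟩
  intro α β i j
  by_cases hs : α + β = 0
  · have hβ : β = -α := by omega
    subst hβ
    have e0 : α + -α = (0:ℤ) := by ring
    have hf0 : f₁ (α + -α, i+j) = 0 := by rw [hf₁]; simp [e0]
    have hΨg : Ψ (α,i) (-α,j) = g α i j := by
      rw [← hgg, hψbdef]
      simp only [hf0, mul_zero, sub_zero]
    rw [hΨg, e0, hFval, if_pos rfl]
    rcases eq_or_ne α 0 with h0 | h0
    · subst h0
      rw [hGzero]
      simp only [Acoef]
      push_cast
      split_ifs <;> ring
    · rcases Nat.eq_zero_or_pos (i + j) with hij | hij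
      · have hi : i = 0 := by omega
        have hj : j = 0 := by omega
        subst hi; subst hj
        rw [if_pos (⟨rfl, rfl, rfl⟩ : (0:ℤ) = 0 ∧ 0 = 0 ∧ 0 = 0), if_pos rfl, hu α h0]
        simp only [Acoef]
        have h2q : (2:ℂ) * q ≠ 0 := by
          intro hcon
          exact hq' (by linear_combination hcon/2)
        field_simp
        push_cast
        ring
      · have hij' : ¬ ((0:ℤ) = 0 ∧ i = 0 ∧ j = 0) := by
          rintro ⟨-, h1, h2⟩; omega
        have hij2 : i + j ≠ 0 := by omega
        rw [if_neg hij', if_neg hij2, mul_zero, sub_zero]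
        rw [hsum α h0 i j, hlin (i+j) hij α h0]
        have hne := hcast2q (i+j)
        rw [← mul_div_assoc, eq_div_iff hne]
        simp only [Acoef]
        push_cast
        ring
  · have hs' : ¬ (α + β = 0 ∧ i = 0 ∧ j = 0) := by tauto
    rw [if_neg hs', hFval, if_neg hs]
    have hoff := offdiag α β i j hs
    rw [hf₁] at hoff
    simp only [if_neg hs] at hoff
    simpa using hoff

/-- the Virasoro-type value function -/
def cval (p p' : ℤ × ℕ) : ℂ :=
  if p.1 + p'.1 = 0 ∧ p.2 = 0 ∧ p'.2 = 0 then ((p.1:ℂ)^3 - p.1)/12 else 0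

lemma cval_skew (p p' : ℤ × ℕ) : cval p p' = - cval p' p := by
  rcases p with ⟨α, i⟩
  rcases p' with ⟨β, j⟩
  simp only [cval]
  by_cases h : α + β = 0 ∧ i = 0 ∧ j = 0
  · rw [if_pos h, if_pos ⟨by omega, h.2.2, h.2.1⟩]
    have hβ : β = -α := by omega
    subst hβ
    push_cast
    ring
  · rw [if_neg h, if_neg (by rintro ⟨h1,h2,h3⟩; exact h ⟨by omega, h3, h2⟩), neg_zero]

lemma cval_coc (q : ℕ) (α β γ : ℤ) (i j k : ℕ) :
    Acoef q α β i j * cval (α+β, i+j) (γ,k)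
    + Acoef q β γ j k * cval (β+γ, j+k) (α,i)
    + Acoef q γ α k i * cval (γ+α, k+i) (β,j) = 0 := by
  simp only [cval, Acoef]
  split_ifs with d1 d2 d3
  · obtain ⟨e1, e2, e3⟩ := d1
    have hγ : γ = -α - β := by omega
    have hi : i = 0 := by omega
    have hj : j = 0 := by omega
    subst hγ; subst hi; subst hj; subst e3
    push_cast
    ring
  · exfalso; omega
  · exfalso; omega
  · exfalso; omega
  · exfalso; omega
  · exfalso; omega
  · exfalso; omega
  · simp

/-- The bilinear form `φ` on the Block type Lie algebra `B(q)` determined on basis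
elements by `φ(L_{α,i}, L_{β,j}) = δ_{α+β,0} δ_{i,0} δ_{j,0} (α³ − α)/12` is a
2-cocycle which is not a 2-coboundary, and every 2-cocycle on `B(q)` is the sum of a
scalar multiple of `φ` and a 2-coboundary; hence `H²(B(q), ℂ)` is one-dimensional,
spanned by the class of `φ`. -/
theorem block_second_cohomology (q : ℕ) (hq : 0 < q)
    (L : Module.Basis (ℤ × ℕ) ℂ B)
    (hL : ∀ (α β : ℤ) (i j : ℕ),
      ⁅L (α, i), L (β, j)⁆ =
        (((β * ((i : ℤ) + q) - α * ((j : ℤ) + q)) : ℤ) : ℂ) • L (α + β, i + j)) :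
    ∃ φ : B →ₗ[ℂ] B →ₗ[ℂ] ℂ,
      (∀ (α β : ℤ) (i j : ℕ),
        φ (L (α, i)) (L (β, j)) =
          if α + β = 0 ∧ i = 0 ∧ j = 0 then ((α : ℂ) ^ 3 - (α : ℂ)) / 12 else 0) ∧
      IsTwoCocycle φ ∧
      ¬ IsTwoCoboundary φ ∧
      (∀ ψ : B →ₗ[ℂ] B →ₗ[ℂ] ℂ, IsTwoCocycle ψ →
        ∃ c : ℂ, IsTwoCoboundary (ψ - c • φ)) := by
  have hq' : (q : ℂ) ≠ 0 := Nat.cast_ne_zero.2 hq.ne'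
  set φ : B →ₗ[ℂ] B →ₗ[ℂ] ℂ :=
    L.constr ℂ (fun p => L.constr ℂ (fun p' => cval p p')) with hφdef
  have hφval : ∀ p p' : ℤ × ℕ, φ (L p) (L p') = cval p p' := by
    intro p p'
    rw [hφdef, Module.Basis.constr_basis, Module.Basis.constr_basis]
  have part1 : ∀ (α β : ℤ) (i j : ℕ),
      φ (L (α, i)) (L (β, j)) =
        if α + β = 0 ∧ i = 0 ∧ j = 0 then ((α : ℂ) ^ 3 - (α : ℂ)) / 12 else 0 := by
    intro α β i j
    rw [hφval]
    rfl
  -- skew symmetry of φ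
  have hskewmap : φ = - φ.flip := by
    apply L.ext; intro p
    apply L.ext; intro p'
    simp only [LinearMap.neg_apply, LinearMap.flip_apply, hφval]
    exact cval_skew p p'
  have hskew : ∀ x y : B, φ x y = - φ y x := by
    intro x y
    have := LinearMap.congr_fun (LinearMap.congr_fun hskewmap x) y
    simpa using this
  -- cocycle identity for φ
  have hjac : ∀ x y z : B, φ ⁅x, y⁆ z + φ ⁅y, z⁆ x + φ ⁅z, x⁆ y = 0 := by
    set T₁ : B →ₗ[ℂ] B →ₗ[ℂ] B →ₗ[ℂ] ℂ :=
      (LinearMap.llcomp ℂ B B (B →ₗ[ℂ] ℂ) φ) ∘ₗ (LieAlgebra.ad ℂ B : B →ₗ[ℂ] Module.End ℂ B) with hT₁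
    have hT₁val : ∀ x y z : B, T₁ x y z = φ ⁅x, y⁆ z := fun _ _ _ => rfl
    set T : B →ₗ[ℂ] B →ₗ[ℂ] B →ₗ[ℂ] ℂ :=
      T₁ + ((LinearMap.lflip : (B →ₗ[ℂ] B →ₗ[ℂ] ℂ) ≃ₗ[ℂ] (B →ₗ[ℂ] B →ₗ[ℂ] ℂ)).toLinearMap ∘ₗ T₁).flip + (LinearMap.lflip : (B →ₗ[ℂ] B →ₗ[ℂ] ℂ) ≃ₗ[ℂ] (B →ₗ[ℂ] B →ₗ[ℂ] ℂ)).toLinearMap ∘ₗ T₁.flip with hT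
    have hTval : ∀ x y z : B,
        T x y z = φ ⁅x, y⁆ z + φ ⁅y, z⁆ x + φ ⁅z, x⁆ y := fun _ _ _ => rfl
    have hT0 : T = 0 := by
      apply L.ext; intro p1
      apply L.ext; intro p2
      apply L.ext; intro p3
      obtain ⟨α, i⟩ := p1
      obtain ⟨β, j⟩ := p2
      obtain ⟨γ, k⟩ := p3
      rw [show ((0 : B →ₗ[ℂ] B →ₗ[ℂ] B →ₗ[ℂ] ℂ) (L (α,i)) (L (β,j)) (L (γ,k))) = 0 from rfl]
      rw [hTval, hL α β i j, hL β γ j k, hL γ α k i]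
      simp only [map_smul, LinearMap.smul_apply, smul_eq_mul, hφval]
      exact cval_coc q α β γ i j k
    intro x y z
    rw [← hTval, hT0]
    rfl
  -- φ is not a coboundary
  have hnotcb : ¬ IsTwoCoboundary φ := by
    rintro ⟨f, hf⟩
    have h1 := hf (L (1, 0)) (L (-1, 0))
    rw [hL 1 (-1) 0 0, part1, map_smul, smul_eq_mul] at h1
    norm_num at h1
    have hf0 : f (L 0) = 0 := by
      rcases h1 with h | h
      · exfalso; apply hq'; linear_combination -h/2
      · exact h
    have h2 := hf (L (2, 0)) (L (-2, 0))
    rw [hL 2 (-2) 0 0, part1, map_smul, smul_eq_mul] at h2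
    norm_num [show f (L (0,0)) = 0 from hf0] at h2
  refine ⟨φ, part1, ⟨hskew, hjac⟩, hnotcb, ?_⟩
  -- every cocycle is a multiple of φ plus a coboundary
  intro ψ hψ
  have hΨskew : ∀ p p' : ℤ × ℕ, ψ (L p) (L p') = - ψ (L p') (L p) :=
    fun p p' => hψ.1 (L p) (L p')
  have hΨcoc : ∀ (α β γ : ℤ) (i j k : ℕ),
      Acoef q α β i j * ψ (L (α+β, i+j)) (L (γ,k))
      + Acoef q β γ j k * ψ (L (β+γ, j+k)) (L (α,i))
      + Acoef q γ α k i * ψ (L (γ+α, k+i)) (L (β,j)) = 0 := by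
    intro α β γ i j k
    have h := hψ.2 (L (α,i)) (L (β,j)) (L (γ,k))
    rw [hL α β i j, hL β γ j k, hL γ α k i] at h
    simpa only [map_smul, LinearMap.smul_apply, smul_eq_mul, Acoef] using h
  obtain ⟨c, F, hcF⟩ := key q hq (fun p p' => ψ (L p) (L p')) hΨskew hΨcoc
  set f : B →ₗ[ℂ] ℂ := L.constr ℂ F with hfdef
  have hEq : ψ - c • φ = (LinearMap.llcomp ℂ B B ℂ f) ∘ₗ (LieAlgebra.ad ℂ B : B →ₗ[ℂ] Module.End ℂ B) := by
    apply L.ext; intro p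
    apply L.ext; intro p'
    obtain ⟨α, i⟩ := p
    obtain ⟨β, j⟩ := p'
    have hrhs : ((LinearMap.llcomp ℂ B B ℂ f) ∘ₗ (LieAlgebra.ad ℂ B : B →ₗ[ℂ] Module.End ℂ B)) (L (α,i)) (L (β,j))
        = f ⁅L (α,i), L (β,j)⁆ := rfl
    rw [hrhs, hL α β i j, map_smul, smul_eq_mul, hfdef, Module.Basis.constr_basis]
    simp only [LinearMap.sub_apply, LinearMap.smul_apply, smul_eq_mul, part1]
    exact hcF α β i j
  refine ⟨c, f, fun x y => ?_⟩
  have := LinearMap.congr_fun (LinearMap.congr_fun hEq x) y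
  simpa using this

end
end

section
/- Let φ be a 2-cocycle on B(q) satisfying φ(L_{α,i}, L_{0,0}) = 0 for all α ≠ 0, i ∈ ℤ_{≥0}, and φ(L_{−1,i}, L_{1,0}) = 0 for all i ∈ ℤ_{≥0}. Then: (1) φ(L_{α,i}, L_{β,j}) = 0 whenever α + β ≠ 0; and (2) φ(L_{α,i}, L_{−α,j}) = 0 whenever i ≠ j. -/
variable {B : Type} [LieRing B] [LieAlgebra ℂ B]

private lemma aux_cancel {x : ℂ} {c : ℤ} (hc : c ≠ 0) (h : (c : ℂ) * x = 0) : x = 0 :=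
  (mul_eq_zero.mp h).resolve_left (Int.cast_ne_zero.mpr hc)

/-- Let `φ` be a 2-cocycle on the Block type Lie algebra `B(q)` with
`φ(L_{α,i}, L_{0,0}) = 0` for all `α ≠ 0` and `φ(L_{−1,i}, L_{1,0}) = 0` for all
`i`.  Then (1) `φ(L_{α,i}, L_{β,j}) = 0` whenever `α + β ≠ 0`, and
(2) `φ(L_{α,i}, L_{−α,j}) = 0` whenever `i ≠ j`. -/
theorem block_cocycle_support (q : ℕ) (hq : 0 < q)
    (L : Module.Basis (ℤ × ℕ) ℂ B)
    (hL : ∀ (α β : ℤ) (i j : ℕ),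
      ⁅L (α, i), L (β, j)⁆ =
        (((β * ((i : ℤ) + q) - α * ((j : ℤ) + q)) : ℤ) : ℂ) • L (α + β, i + j))
    (φ : B →ₗ[ℂ] B →ₗ[ℂ] ℂ) (hφ : IsTwoCocycle φ)
    (h1 : ∀ (α : ℤ) (i : ℕ), α ≠ 0 → φ (L (α, i)) (L (0, 0)) = 0)
    (h2 : ∀ i : ℕ, φ (L (-1, i)) (L (1, 0)) = 0) :
    (∀ (α β : ℤ) (i j : ℕ), α + β ≠ 0 → φ (L (α, i)) (L (β, j)) = 0) ∧
    (∀ (α : ℤ) (i j : ℕ), i ≠ j → φ (L (α, i)) (L (-α, j)) = 0) := by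
  obtain ⟨hsk, hco⟩ := hφ
  have coc : ∀ (α β γ : ℤ) (i j k : ℕ),
      (((β * ((i : ℤ) + q) - α * ((j : ℤ) + q)) : ℤ) : ℂ) * φ (L (α + β, i + j)) (L (γ, k))
      + (((γ * ((j : ℤ) + q) - β * ((k : ℤ) + q)) : ℤ) : ℂ) * φ (L (β + γ, j + k)) (L (α, i))
      + (((α * ((k : ℤ) + q) - γ * ((i : ℤ) + q)) : ℤ) : ℂ) * φ (L (γ + α, k + i)) (L (β, j))
        = 0 := by
    intro α β γ i j k
    have h := hco (L (α, i)) (L (β, j)) (L (γ, k))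
    rw [hL α β i j, hL β γ j k, hL γ α k i] at h
    simpa only [map_smul, LinearMap.smul_apply, smul_eq_mul] using h
  have part1 : ∀ (α β : ℤ) (i j : ℕ), α + β ≠ 0 → φ (L (α, i)) (L (β, j)) = 0 := by
    intro α β i j hab
    have hc := coc α β 0 i j 0
    simp only [add_zero, zero_add] at hc
    rw [h1 (α + β) (i + j) hab, hsk (L (β, j)) (L (α, i))] at hc
    have key : (((α + β) * q : ℤ) : ℂ) * φ (L (α, i)) (L (β, j)) = 0 := by
      linear_combination (norm := (push_cast; ring1)) hc
    exact aux_cancel (mul_ne_zero hab (by omega)) key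
  -- recursion in α
  have R : ∀ (α : ℤ) (i j : ℕ),
      (((α - 1) * q - i : ℤ) : ℂ) * φ (L (α + 1, i)) (L (-α - 1, j))
        = (((j : ℤ) + (α + 2) * q : ℤ) : ℂ) * φ (L (α, i)) (L (-α, j)) := by
    intro α i j
    have hc := coc α (-α - 1) 1 i j 0
    rw [show α + (-α - 1) = (-1 : ℤ) by ring, show (-α - 1) + 1 = -α by ring,
      show (1 : ℤ) + α = α + 1 by ring] at hc
    simp only [add_zero, zero_add] at hc
    rw [h2 (i + j), hsk (L (-α, j)) (L (α, i))] at hc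
    linear_combination (norm := (push_cast; ring1)) hc
  have hE0 : ∀ i : ℕ, φ (L (0, i)) (L (0, 0)) = 0 := by
    intro i
    have h := R (-1) i 0
    rw [show (-1 : ℤ) + 1 = 0 by ring, show -(-1 : ℤ) - 1 = 0 by ring, neg_neg] at h
    rw [h2 i] at h
    have key : ((-2 * q - i : ℤ) : ℂ) * φ (L (0, i)) (L (0, 0)) = 0 := by
      linear_combination (norm := (push_cast; ring1)) h
    exact aux_cancel (by omega) key
  have hE1 : ∀ i : ℕ, φ (L (1, i)) (L (-1, 0)) = 0 := by
    intro i
    have h := R 0 i 0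
    rw [show (0 : ℤ) + 1 = 1 by ring, show -(0 : ℤ) - 1 = -1 by ring, neg_zero] at h
    rw [hE0 i] at h
    have key : ((-1 * q - i : ℤ) : ℂ) * φ (L (1, i)) (L (-1, 0)) = 0 := by
      linear_combination (norm := (push_cast; ring1)) h
    exact aux_cancel (by omega) key
  have hEm2 : ∀ i : ℕ, 0 < i → φ (L (-2, i)) (L (2, 0)) = 0 := by
    intro i hi
    have hc := coc (-1) 2 (-1) i 0 0
    rw [show (-1 : ℤ) + 2 = 1 by ring, show (2 : ℤ) + -1 = 1 by ring,
      show (-1 : ℤ) + -1 = -2 by ring] at hc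
    simp only [add_zero, zero_add] at hc
    rw [hE1 i, hsk (L (1, 0)) (L (-1, i)), h2 i] at hc
    have key : ((i : ℤ) : ℂ) * φ (L (-2, i)) (L (2, 0)) = 0 := by
      linear_combination (norm := (push_cast; ring1)) hc
    exact aux_cancel (by omega) key
  have hneg : ∀ i : ℕ, 0 < i → ∀ n : ℕ,
      φ (L (-1 - (n : ℤ), i)) (L (-(-1 - (n : ℤ)), 0)) = 0 := by
    intro i hi n
    induction n with
    | zero => simpa using h2 i
    | succ n IH =>
      rw [show (-1 - ((n + 1 : ℕ) : ℤ)) = -2 - (n : ℤ) by push_cast; ring]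
      rcases Nat.eq_zero_or_pos n with rfl | hn
      · rw [show (-2 - ((0 : ℕ) : ℤ)) = -2 by norm_num, show -(-2 : ℤ) = 2 by norm_num]
        exact hEm2 i hi
      · have h := R (-2 - (n : ℤ)) i 0
        rw [show (-2 - (n : ℤ)) + 1 = -1 - (n : ℤ) by ring,
          show -(-2 - (n : ℤ)) - 1 = -(-1 - (n : ℤ)) by ring] at h
        rw [IH] at h
        have key : ((-(n : ℤ) * q : ℤ) : ℂ)
            * φ (L (-2 - (n : ℤ), i)) (L (-(-2 - (n : ℤ)), 0)) = 0 := by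
          linear_combination (norm := (push_cast; ring1)) -h
        exact aux_cancel (mul_ne_zero (by omega) (by omega)) key
  have hpos : ∀ i : ℕ, 0 < i → ∀ m : ℕ,
      φ (L ((m : ℤ) + 1, i)) (L (-((m : ℤ) + 1), 0)) = 0 := by
    intro i hi m
    have hc := coc 0 (-((m : ℤ) + 1)) ((m : ℤ) + 1) i 0 0
    simp only [add_zero, zero_add] at hc
    rw [show -((m : ℤ) + 1) + ((m : ℤ) + 1) = 0 by ring] at hc
    have h0 := hneg i hi m
    rw [show (-1 - (m : ℤ)) = -((m : ℤ) + 1) by ring, neg_neg] at h0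
    rw [h0, hsk (L (0, 0)) (L (0, i)), hE0 i] at hc
    have key : ((((m : ℤ) + 1) * ((i : ℤ) + q) : ℤ) : ℂ)
        * φ (L ((m : ℤ) + 1, i)) (L (-((m : ℤ) + 1), 0)) = 0 := by
      linear_combination (norm := (push_cast; ring1)) -hc
    exact aux_cancel (mul_ne_zero (by omega) (by omega)) key
  have hE : ∀ (α : ℤ) (i : ℕ), 0 < i → φ (L (α, i)) (L (-α, 0)) = 0 := by
    intro α i hi
    rcases lt_trichotomy α 0 with h | rfl | h
    · obtain ⟨n, rfl⟩ : ∃ n : ℕ, α = -1 - (n : ℤ) := ⟨(-1 - α).toNat, by omega⟩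
      exact hneg i hi n
    · rw [neg_zero]; exact hE0 i
    · obtain ⟨n, rfl⟩ : ∃ n : ℕ, α = (n : ℤ) + 1 := ⟨(α - 1).toNat, by omega⟩
      exact hpos i hi n
  have hE' : ∀ (α : ℤ) (j : ℕ), 0 < j → φ (L (α, 0)) (L (-α, j)) = 0 := by
    intro α j hj
    have h := hE (-α) j hj
    rw [neg_neg] at h
    rw [hsk (L (α, 0)) (L (-α, j)), h, neg_zero]
  have hFormula : ∀ (α : ℤ), α ≠ 0 → ∀ (j k : ℕ), 0 < j + k →
      (((k : ℤ) + q : ℤ) : ℂ) * φ (L (α, k)) (L (-α, j))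
        = (((j : ℤ) + 2 * q : ℤ) : ℂ) * φ (L (0, j)) (L (0, k)) := by
    intro α hα j k hjk
    have hc := coc α (-α) 0 0 j k
    rw [show α + -α = (0 : ℤ) by ring] at hc
    simp only [add_zero, zero_add] at hc
    have h0 := hE (-α) (j + k) hjk
    rw [neg_neg] at h0
    rw [h0] at hc
    have key : ((α : ℤ) : ℂ) * ((((k : ℤ) + q : ℤ) : ℂ) * φ (L (α, k)) (L (-α, j))
        - (((j : ℤ) + 2 * q : ℤ) : ℂ) * φ (L (0, j)) (L (0, k))) = 0 := by
      linear_combination (norm := (push_cast; ring1)) hc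
    exact sub_eq_zero.mp (aux_cancel hα key)
  have hG : ∀ i j : ℕ, 0 < i + j → φ (L (0, j)) (L (0, i)) = 0 := by
    intro i j hij
    have hc := coc 2 (-1) (-1) i j 0
    rw [show (2 : ℤ) + -1 = 1 by ring, show (-1 : ℤ) + -1 = -2 by ring,
      show (-1 : ℤ) + 2 = 1 by ring] at hc
    simp only [add_zero, zero_add] at hc
    rw [hE 1 (i + j) hij, hsk (L (-2, j)) (L (2, i))] at hc
    have hF1 := hFormula 1 one_ne_zero j i (by omega)
    have hF2 := hFormula 2 (by norm_num) j i (by omega)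
    have key : ((((j : ℤ) + i + 3 * q) * ((j : ℤ) + 2 * q) : ℤ) : ℂ)
        * φ (L (0, j)) (L (0, i)) = 0 := by
      linear_combination (norm := (push_cast; ring1))
        (((i : ℤ) : ℂ) + (q : ℂ)) * hc - ((j : ℂ)) * hF2 - (((i : ℤ) : ℂ) + 3 * (q : ℂ)) * hF1
    exact aux_cancel (mul_ne_zero (by omega) (by omega)) key
  refine ⟨part1, ?_⟩
  intro α i j hij
  by_cases hα : α = 0
  · subst hα
    rw [neg_zero]
    exact hG j i (by omega)
  · have hF := hFormula α hα j i (by omega)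
    rw [hG i j (by omega), mul_zero] at hF
    exact aux_cancel (by omega) hF
end

section
/- Let φ be a 2-cocycle on B(q) satisfying φ(L_{α,i}, L_{0,0}) = 0 for all α ≠ 0, i ∈ ℤ_{≥0}, and φ(L_{−1,i}, L_{1,0}) = 0 for all i ∈ ℤ_{≥0}. Then: (1) φ(L_{α,i}, L_{−α,i}) = 0 for all α ∈ ℤ whenever i ≠ 0; and (2) φ(L_{α,0}, L_{−α,0}) = ((α³ − α)/6) · φ(L_{2,0}, L_{−2,0}) for all α ∈ ℤ. -/
variable {B : Type} [LieRing B] [LieAlgebra ℂ B]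

/-- Let `φ` be a 2-cocycle on the Block type Lie algebra `B(q)` with
`φ(L_{α,i}, L_{0,0}) = 0` for all `α ≠ 0` and `φ(L_{−1,i}, L_{1,0}) = 0` for all
`i`.  Then (1) `φ(L_{α,i}, L_{−α,i}) = 0` for all `α` whenever `i ≠ 0`, and
(2) `φ(L_{α,0}, L_{−α,0}) = ((α³ − α)/6) φ(L_{2,0}, L_{−2,0})` for all `α`. -/
theorem block_cocycle_diagonal_values (q : ℕ) (hq : 0 < q)
    (L : Module.Basis (ℤ × ℕ) ℂ B)
    (hL : ∀ (α β : ℤ) (i j : ℕ),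
      ⁅L (α, i), L (β, j)⁆ =
        (((β * ((i : ℤ) + q) - α * ((j : ℤ) + q)) : ℤ) : ℂ) • L (α + β, i + j))
    (φ : B →ₗ[ℂ] B →ₗ[ℂ] ℂ) (hφ : IsTwoCocycle φ)
    (h1 : ∀ (α : ℤ) (i : ℕ), α ≠ 0 → φ (L (α, i)) (L (0, 0)) = 0)
    (h2 : ∀ i : ℕ, φ (L (-1, i)) (L (1, 0)) = 0) :
    (∀ (α : ℤ) (i : ℕ), i ≠ 0 → φ (L (α, i)) (L (-α, i)) = 0) ∧
    (∀ α : ℤ, φ (L (α, 0)) (L (-α, 0)) =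
      (((α : ℂ) ^ 3 - (α : ℂ)) / 6) * φ (L (2, 0)) (L (-2, 0))) := by
  obtain ⟨hsk, hco⟩ := hφ
  have hzero : ∀ x : B, φ x x = 0 := fun x => by linear_combination (1/2 : ℂ) * hsk x x
  have hq1 : (1:ℂ) + q ≠ 0 := by
    have h : ((1 + q : ℕ) : ℂ) ≠ 0 := Nat.cast_ne_zero.mpr (by omega)
    push_cast at h; exact h
  have hq0 : (q:ℂ) ≠ 0 := Nat.cast_ne_zero.mpr hq.ne'
  have hR : ∀ (α : ℤ) (i j : ℕ),
      ((α:ℂ) * q - i - q) * φ (L (α + 1, i)) (L (-(α + 1), j)) =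
      ((j:ℂ) + ((α:ℂ) + 2) * q) * φ (L (α, i)) (L (-α, j)) := by
    intro α i j
    have hc := hco (L (1, 0)) (L (α, i)) (L (-α - 1, j))
    rw [hL 1 α 0 i, hL α (-α - 1) i j, hL (-α - 1) 1 j 0] at hc
    rw [show (1:ℤ) + α = α + 1 from by ring,
        show α + (-α - 1) = -1 from by ring,
        show -α - 1 + 1 = -α from by ring] at hc
    rw [show -α - 1 = -(α + 1) from by ring] at hc
    simp only [zero_add, add_zero, map_smul, LinearMap.smul_apply, smul_eq_mul] at hc
    rw [h2 (i + j), hsk (L (-α, j)) (L (α, i))] at hc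
    push_cast at hc
    linear_combination hc
  have hS : ∀ (α : ℤ) (i j : ℕ),
      (α:ℂ) * (1 + q) * φ (L (α, i + 1)) (L (-α, j)) +
        (α:ℂ) * ((i:ℂ) + j + 2 * q) * φ (L (0, 1)) (L (0, i + j)) =
      (α:ℂ) * (1 + q) * φ (L (α, i)) (L (-α, j + 1)) := by
    intro α i j
    have hc := hco (L (0, 1)) (L (α, i)) (L (-α, j))
    rw [hL 0 α 1 i, hL α (-α) i j, hL (-α) 0 j 1] at hc
    rw [show (0:ℤ) + α = α from by ring, show α + -α = 0 from by ring,
        show -α + 0 = -α from by ring,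
        show 1 + i = i + 1 from by omega] at hc
    simp only [map_smul, LinearMap.smul_apply, smul_eq_mul] at hc
    rw [hsk (L (0, i + j)) (L (0, 1)), hsk (L (-α, j + 1)) (L (α, i))] at hc
    push_cast at hc
    linear_combination hc
  -- φ(L_{1,0}, L_{-1,m}) = 0
  have u1 : ∀ m : ℕ, φ (L (1, 0)) (L (-1, m)) = 0 := by
    intro m; rw [hsk (L (1, 0)) (L (-1, m)), h2 m, neg_zero]
  -- φ(L_{0,0}, L_{0,m}) = 0
  have u0 : ∀ m : ℕ, φ (L (0, 0)) (L (0, m)) = 0 := by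
    intro m
    have h := hR 0 0 m
    norm_num [u1 m, -Prod.mk_zero_zero] at h
    have hne : (m:ℂ) + 2 * q ≠ 0 := by
      have h' : ((m + 2 * q : ℕ) : ℂ) ≠ 0 := Nat.cast_ne_zero.mpr (by omega)
      push_cast at h'; exact h'
    exact h.resolve_left hne
  -- φ(L_{-1,0}, L_{1,m}) = 0
  have um1 : ∀ m : ℕ, φ (L (-1, 0)) (L (1, m)) = 0 := by
    intro m
    have h := hR (-1) 0 m
    norm_num [u0 m, -Prod.mk_zero_zero] at h
    have hne : (m:ℂ) + q ≠ 0 := by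
      have h' : ((m + q : ℕ) : ℂ) ≠ 0 := Nat.cast_ne_zero.mpr (by omega)
      push_cast at h'; exact h'
    exact h.resolve_left hne
  -- (k+2q)·φ(L_{0,1},L_{0,k}) = -(1+q)·φ(L_{1,1},L_{-1,k})
  have hf0 : ∀ k : ℕ, ((k:ℂ) + 2 * q) * φ (L (0, 1)) (L (0, k)) =
      -((1:ℂ) + q) * φ (L (1, 1)) (L (-1, k)) := by
    intro k
    have h := hS 1 0 k
    simp only [zero_add] at h
    rw [u1 (k + 1)] at h
    push_cast at h
    linear_combination h
  have shift1 : ∀ i j : ℕ, φ (L (1, i + 1)) (L (-1, j)) =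
      φ (L (1, i)) (L (-1, j + 1)) + φ (L (1, 1)) (L (-1, i + j)) := by
    intro i j
    have h := hS 1 i j
    have h' := hf0 (i + j)
    push_cast at h h'
    have hE : ((1:ℂ) + q) * (φ (L (1, i + 1)) (L (-1, j)) -
        φ (L (1, i)) (L (-1, j + 1)) - φ (L (1, 1)) (L (-1, i + j))) = 0 := by
      linear_combination h - h'
    have := (mul_eq_zero.mp hE).resolve_left hq1
    linear_combination this
  have Lin : ∀ s j : ℕ, φ (L (1, s + 1)) (L (-1, j)) =
      ((s:ℂ) + 1) * φ (L (1, 1)) (L (-1, s + j)) := by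
    intro s
    induction s with
    | zero => intro j; simp
    | succ s ih =>
      intro j
      rw [shift1 (s + 1) j, ih (j + 1), show s + (j + 1) = s + 1 + j from by omega]
      push_cast; ring
  have hD0 : ∀ k : ℕ, φ (L (1, 1)) (L (-1, k)) = 0 := by
    intro k
    have h := Lin k 0
    rw [add_zero, hsk (L (1, k + 1)) (L (-1, 0)), um1 (k + 1), neg_zero] at h
    have hne : (k:ℂ) + 1 ≠ 0 := by
      have h' : ((k + 1 : ℕ) : ℂ) ≠ 0 := Nat.cast_ne_zero.mpr (by omega)
      push_cast at h'; exact h'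
    have := mul_eq_zero.mp h.symm
    exact this.resolve_left hne
  have hf00 : ∀ k : ℕ, φ (L (0, 1)) (L (0, k)) = 0 := by
    intro k
    have h := hf0 k
    rw [hD0 k, mul_zero] at h
    have hne : (k:ℂ) + 2 * q ≠ 0 := by
      have h' : ((k + 2 * q : ℕ) : ℂ) ≠ 0 := Nat.cast_ne_zero.mpr (by omega)
      push_cast at h'; exact h'
    exact (mul_eq_zero.mp h).resolve_left hne
  have shift : ∀ (α : ℤ), α ≠ 0 → ∀ i j : ℕ,
      φ (L (α, i + 1)) (L (-α, j)) = φ (L (α, i)) (L (-α, j + 1)) := by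
    intro α hα i j
    have h := hS α i j
    rw [hf00 (i + j), mul_zero, add_zero] at h
    have hne : (α:ℂ) * (1 + q) ≠ 0 := mul_ne_zero (Int.cast_ne_zero.mpr hα) hq1
    exact mul_left_cancel₀ hne h
  have reduce : ∀ (α : ℤ), α ≠ 0 → ∀ i j : ℕ,
      φ (L (α, i)) (L (-α, j)) = φ (L (α, 0)) (L (-α, i + j)) := by
    intro α hα i
    induction i with
    | zero => intro j; rw [Nat.zero_add]
    | succ i ih =>
      intro j
      rw [shift α hα i j, ih (j + 1), show i + (j + 1) = i + 1 + j from by omega]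
  have hGall : ∀ (α : ℤ) (n : ℕ), φ (L (α, 0)) (L (-α, n + 1)) = 0 := by
    intro α n
    by_cases hα0 : α = 0
    · subst hα0; simpa using u0 (n + 1)
    by_cases hα1 : α = -1
    · subst hα1; simpa using um1 (n + 1)
    have hαp1 : α + 1 ≠ 0 := by omega
    have hA := hR α 0 (n + 1)
    have hB := hR α 1 n
    rw [reduce (α + 1) hαp1 1 n, reduce α hα0 1 n,
        show (1:ℕ) + n = n + 1 from by omega] at hB
    push_cast at hA hB
    have hXY : φ (L (α + 1, 0)) (L (-(α + 1), n + 1)) =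
        φ (L (α, 0)) (L (-α, n + 1)) := by linear_combination hA - hB
    have hfin : ((n:ℂ) + 1 + 3 * q) * φ (L (α, 0)) (L (-α, n + 1)) = 0 := by
      linear_combination ((α:ℂ) * q - q) * hXY - hA
    have hne : (n:ℂ) + 1 + 3 * q ≠ 0 := by
      have h' : ((n + 1 + 3 * q : ℕ) : ℂ) ≠ 0 := Nat.cast_ne_zero.mpr (by omega)
      push_cast at h'; exact h'
    exact (mul_eq_zero.mp hfin).resolve_left hne
  have part1 : ∀ (α : ℤ) (i : ℕ), i ≠ 0 → φ (L (α, i)) (L (-α, i)) = 0 := by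
    intro α i hi
    by_cases hα : α = 0
    · subst hα; rw [neg_zero]; exact hzero _
    obtain ⟨m, hm⟩ : ∃ m, i + i = m + 1 := ⟨i + i - 1, by omega⟩
    rw [reduce α hα i i, hm]
    exact hGall α m
  -- part 2
  have hrec : ∀ α : ℤ, ((α:ℂ) - 1) * φ (L (α + 1, 0)) (L (-(α + 1), 0)) =
      ((α:ℂ) + 2) * φ (L (α, 0)) (L (-α, 0)) := by
    intro α
    have h := hR α 0 0
    push_cast at h
    have hE : (q:ℂ) * (((α:ℂ) - 1) * φ (L (α + 1, 0)) (L (-(α + 1), 0)) -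
        ((α:ℂ) + 2) * φ (L (α, 0)) (L (-α, 0))) = 0 := by linear_combination h
    have := (mul_eq_zero.mp hE).resolve_left hq0
    linear_combination this
  have claim2 : ∀ m : ℕ, 6 * φ (L ((m:ℤ) + 2, 0)) (L (-((m:ℤ) + 2), 0)) =
      ((m:ℂ) + 1) * ((m:ℂ) + 2) * ((m:ℂ) + 3) * φ (L (2, 0)) (L (-2, 0)) := by
    intro m
    induction m with
    | zero => norm_num
    | succ m ih =>
      have h := hrec ((m:ℤ) + 2)
      push_cast at h
      rw [show ((m + 1 : ℕ) : ℤ) + 2 = (m:ℤ) + 2 + 1 from by push_cast; ring]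
      push_cast
      have hne : (m:ℂ) + 1 ≠ 0 := by
        have h' : ((m + 1 : ℕ) : ℂ) ≠ 0 := Nat.cast_ne_zero.mpr (by omega)
        push_cast at h'; exact h'
      have key : ((m:ℂ) + 1) * (6 * φ (L ((m:ℤ) + 2 + 1, 0)) (L (-((m:ℤ) + 2 + 1), 0)) -
          ((m:ℂ) + 2) * ((m:ℂ) + 3) * ((m:ℂ) + 4) * φ (L (2, 0)) (L (-2, 0))) = 0 := by
        linear_combination 6 * h + ((m:ℂ) + 4) * ih
      have := (mul_eq_zero.mp key).resolve_left hne
      linear_combination this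
  have main : ∀ n : ℕ, φ (L ((n:ℤ), 0)) (L (-(n:ℤ), 0)) =
      (((n:ℂ) ^ 3 - (n:ℂ)) / 6) * φ (L (2, 0)) (L (-2, 0)) := by
    intro n
    match n with
    | 0 => norm_num [hzero]
    | 1 => norm_num [u1 0]
    | (m + 2) =>
      have h := claim2 m
      push_cast
      linear_combination h / 6
  have part2 : ∀ α : ℤ, φ (L (α, 0)) (L (-α, 0)) =
      (((α : ℂ) ^ 3 - (α : ℂ)) / 6) * φ (L (2, 0)) (L (-2, 0)) := by
    intro α
    obtain ⟨n, rfl | rfl⟩ := Int.eq_nat_or_neg α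
    · push_cast
      exact main n
    · rw [show -(-(n:ℤ)) = (n:ℤ) from neg_neg _,
          hsk (L (-(n:ℤ), 0)) (L ((n:ℤ), 0)), main n]
      push_cast; ring
  exact ⟨part1, part2⟩
end
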